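/- Let S be an independent set of size 2 in the split-star S_n^2 with n ≥ 4. Then |N(S)| ≥ 4n - 8. -/

import Mathlib

/-- The 3-rotation `g_i^+` (rotate symbols at positions 1,2,i from left to right,
in 0-based indexing positions 0,1,i): swap positions 1,i then swap positions 0,1. -/
def gPlus (n : ℕ) [NeZero n] (i : Fin n) : Equiv.Perm (Fin n) :=
  Equiv.swap 1 i * Equiv.swap 0 1

/-- The 3-rotation `g_i^-` (rotate symbols at positions 1,2,i from right to left). -/
def gMinus (n : ℕ) [NeZero n] (i : Fin n) : Equiv.Perm (Fin n) :=
  Equiv.swap 0 i * Equiv.swap 0 1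

/-- The generating relation of the alternating group graph: `q` is obtained from `p`
by a 3-rotation `g_i^±` with `3 ≤ i ≤ n` (0-based: `2 ≤ i.val`). -/
def agRel (n : ℕ) [NeZero n] (p q : Equiv.Perm (Fin n)) : Prop :=
  ∃ i : Fin n, 2 ≤ i.val ∧ (q = p * gPlus n i ∨ q = p * gMinus n i)

/-- The alternating group graph `AG_n`, a Cayley graph on the even permutations. -/
def AG (n : ℕ) [NeZero n] :
    SimpleGraph {p : Equiv.Perm (Fin n) // Equiv.Perm.sign p = 1} :=
  SimpleGraph.fromRel (fun p q => agRel n p.1 q.1)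

/-- The split-star graph `S_n^2`, a Cayley graph on all permutations, with the
2-exchange `g_{12}` together with the 3-rotations as generators. -/
def SplitStar (n : ℕ) [NeZero n] : SimpleGraph (Equiv.Perm (Fin n)) :=
  SimpleGraph.fromRel (fun p q => q = p * Equiv.swap 0 1 ∨ agRel n p q)

/-- The (external) neighborhood of a vertex set. -/
def nbhd {V : Type*} (G : SimpleGraph V) (S : Set V) : Set V :=
  {v | v ∉ S ∧ ∃ u ∈ S, G.Adj u v}

/-- An independent set: pairwise nonadjacent vertices. -/
def IsIndep {V : Type*} (G : SimpleGraph V) (S : Set V) : Prop :=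
  ∀ u ∈ S, ∀ v ∈ S, ¬ G.Adj u v

/-- The `ℓ`-component connectivity: the minimum size of a vertex set `F` whose
removal results in a graph with at least `ℓ` components or fewer than `ℓ` vertices. -/
noncomputable def compConn {V : Type*} (G : SimpleGraph V) (l : ℕ) : ℕ :=
  sInf {k | ∃ F : Set V, F.ncard = k ∧
    (l ≤ Nat.card (G.induce Fᶜ).ConnectedComponent ∨ (Fᶜ : Set V).ncard < l)}

set_option linter.unusedSectionVars false

namespace SSP
variable {n : ℕ} [NeZero n]

lemma val_one (hn : 4 ≤ n) : ((1 : Fin n) : ℕ) = 1 := by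
  have := Fin.val_one' n
  have : 1 % n = 1 := Nat.mod_eq_of_lt (by omega)
  omega

lemma zne (hn : 4 ≤ n) : (0 : Fin n) ≠ 1 := by
  intro h
  have := congrArg Fin.val h
  rw [val_one hn] at this
  simp at this

section evals
variable (hn : 4 ≤ n) {m : Fin n} (hm : 2 ≤ m.val)
include hn hm

lemma mne0 : m ≠ 0 := by
  intro h; rw [h] at hm; simp at hm

lemma mne1 : m ≠ 1 := by
  intro h; rw [h, val_one hn] at hm; omega

lemma gPlus_zero : gPlus n m 0 = m := by
  rw [gPlus, Equiv.Perm.mul_apply, Equiv.swap_apply_left, Equiv.swap_apply_left]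

lemma gPlus_one : gPlus n m 1 = 0 := by
  rw [gPlus, Equiv.Perm.mul_apply, Equiv.swap_apply_right,
    Equiv.swap_apply_of_ne_of_ne (zne hn) (Ne.symm (mne0 hn hm))]

lemma gPlus_self : gPlus n m m = 1 := by
  rw [gPlus, Equiv.Perm.mul_apply,
    Equiv.swap_apply_of_ne_of_ne (mne0 hn hm) (mne1 hn hm), Equiv.swap_apply_right]

lemma gPlus_other {j : Fin n} (h0 : j ≠ 0) (h1 : j ≠ 1) (hj : j ≠ m) : gPlus n m j = j := by
  rw [gPlus, Equiv.Perm.mul_apply, Equiv.swap_apply_of_ne_of_ne h0 h1,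
    Equiv.swap_apply_of_ne_of_ne h1 hj]

lemma gMinus_zero : gMinus n m 0 = 1 := by
  rw [gMinus, Equiv.Perm.mul_apply, Equiv.swap_apply_left,
    Equiv.swap_apply_of_ne_of_ne (Ne.symm (zne hn)) (Ne.symm (mne1 hn hm))]

lemma gMinus_one : gMinus n m 1 = m := by
  rw [gMinus, Equiv.Perm.mul_apply, Equiv.swap_apply_right, Equiv.swap_apply_left]

lemma gMinus_self : gMinus n m m = 0 := by
  rw [gMinus, Equiv.Perm.mul_apply,
    Equiv.swap_apply_of_ne_of_ne (mne0 hn hm) (mne1 hn hm), Equiv.swap_apply_right]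

lemma gMinus_other {j : Fin n} (h0 : j ≠ 0) (h1 : j ≠ 1) (hj : j ≠ m) : gMinus n m j = j := by
  rw [gMinus, Equiv.Perm.mul_apply, Equiv.swap_apply_of_ne_of_ne h0 h1,
    Equiv.swap_apply_of_ne_of_ne h0 hj]

lemma gPlus_mul_gMinus : gPlus n m * gMinus n m = 1 := by
  apply Equiv.ext
  intro j
  rcases eq_or_ne j 0 with rfl | h0
  · rw [Equiv.Perm.mul_apply, gMinus_zero hn hm, gPlus_one hn hm]; rfl
  rcases eq_or_ne j 1 with rfl | h1
  · rw [Equiv.Perm.mul_apply, gMinus_one hn hm, gPlus_self hn hm]; rfl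
  rcases eq_or_ne j m with rfl | hj
  · rw [Equiv.Perm.mul_apply, gMinus_self hn hm, gPlus_zero hn hm]; rfl
  · rw [Equiv.Perm.mul_apply, gMinus_other hn hm h0 h1 hj, gPlus_other hn hm h0 h1 hj]; rfl

lemma gPlus_inv : (gPlus n m)⁻¹ = gMinus n m :=
  inv_eq_of_mul_eq_one_right (gPlus_mul_gMinus hn hm)

lemma gMinus_inv : (gMinus n m)⁻¹ = gPlus n m :=
  inv_eq_of_mul_eq_one_left (gPlus_mul_gMinus hn hm)

lemma gPlus_ne_one : gPlus n m ≠ 1 := by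
  intro h
  have := congrArg (fun e => e 1) h
  simp only [gPlus_one hn hm, Equiv.Perm.one_apply] at this
  exact zne hn this

lemma gMinus_ne_one : gMinus n m ≠ 1 := by
  intro h
  have := congrArg (fun e => e 0) h
  simp only [gMinus_zero hn hm, Equiv.Perm.one_apply] at this
  exact zne hn this.symm

end evals

lemma swap01_ne_one (hn : 4 ≤ n) : Equiv.swap (0 : Fin n) 1 ≠ 1 := by
  intro h
  have := congrArg (fun e => e 0) h
  simp only [Equiv.swap_apply_left, Equiv.Perm.one_apply] at this
  exact zne hn this.symm

/-- The generator set. -/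
def Tset (n : ℕ) [NeZero n] : Set (Equiv.Perm (Fin n)) :=
  {s | s = Equiv.swap 0 1 ∨ ∃ m : Fin n, 2 ≤ m.val ∧ (s = gPlus n m ∨ s = gMinus n m)}

lemma ne_one_of_mem (hn : 4 ≤ n) {s : Equiv.Perm (Fin n)} (hs : s ∈ Tset n) : s ≠ 1 := by
  rcases hs with rfl | ⟨m, hm, rfl | rfl⟩
  · exact swap01_ne_one hn
  · exact gPlus_ne_one hn hm
  · exact gMinus_ne_one hn hm

lemma inv_mem (hn : 4 ≤ n) {s : Equiv.Perm (Fin n)} (hs : s ∈ Tset n) : s⁻¹ ∈ Tset n := by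
  rcases hs with rfl | ⟨m, hm, rfl | rfl⟩
  · rw [Equiv.swap_inv]; exact Or.inl rfl
  · rw [gPlus_inv hn hm]; exact Or.inr ⟨m, hm, Or.inr rfl⟩
  · rw [gMinus_inv hn hm]; exact Or.inr ⟨m, hm, Or.inl rfl⟩

lemma adj_iff (hn : 4 ≤ n) (p q : Equiv.Perm (Fin n)) :
    (SplitStar n).Adj p q ↔ ∃ s ∈ Tset n, q = p * s := by
  rw [SplitStar, SimpleGraph.fromRel_adj]
  constructor
  · rintro ⟨hne, (h | ⟨m, hm, h | h⟩) | (h | ⟨m, hm, h | h⟩)⟩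
    · exact ⟨_, Or.inl rfl, h⟩
    · exact ⟨_, Or.inr ⟨m, hm, Or.inl rfl⟩, h⟩
    · exact ⟨_, Or.inr ⟨m, hm, Or.inr rfl⟩, h⟩
    · refine ⟨_, Or.inl rfl, ?_⟩
      rw [h, mul_assoc, Equiv.swap_mul_self, mul_one]
    · refine ⟨_, Or.inr ⟨m, hm, Or.inr rfl⟩, ?_⟩
      rw [h, mul_assoc, ← gPlus_inv hn hm, mul_inv_cancel, mul_one]
    · refine ⟨_, Or.inr ⟨m, hm, Or.inl rfl⟩, ?_⟩
      rw [h, mul_assoc, ← gMinus_inv hn hm, mul_inv_cancel, mul_one]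
  · rintro ⟨s, hs, rfl⟩
    refine ⟨?_, Or.inl ?_⟩
    · intro h
      apply ne_one_of_mem hn hs
      have h2 : p * s = p * 1 := by rw [mul_one]; exact h.symm
      exact mul_left_cancel h2
    · rcases hs with rfl | ⟨m, hm, rfl | rfl⟩
      · exact Or.inl rfl
      · exact Or.inr ⟨m, hm, Or.inl rfl⟩
      · exact Or.inr ⟨m, hm, Or.inr rfl⟩

section key
variable (hn : 4 ≤ n)
include hn

lemma eq_one_of_fix {x w : Equiv.Perm (Fin n)} (h : w = x * w) : x = 1 := by
  have h2 : x * w = 1 * w := by rw [one_mul, ← h]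
  exact mul_right_cancel h2

/-- The common-neighbor generator set. -/
def Cset (n : ℕ) [NeZero n] (x : Equiv.Perm (Fin n)) : Set (Equiv.Perm (Fin n)) :=
  {s | s ∈ Tset n ∧ ∃ w ∈ Tset n, s = x * w}

lemma cset_sub_one {x : Equiv.Perm (Fin n)} (hx : x ≠ 1) (h0 : x 0 = 0) :
    Cset n x ⊆ {Equiv.swap 0 1, gPlus n (x⁻¹ 1)} := by
  rintro s ⟨hsT, w, hwT, hsw⟩
  have app : ∀ j, s j = x (w j) := fun j => by rw [hsw]; rfl
  rcases hsT with rfl | ⟨m, hm, rfl | rfl⟩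
  · exact Set.mem_insert _ _
  · -- s = gPlus m : show x m = 1
    have hxm : x m = 1 := by
      rcases hwT with rfl | ⟨a, ha, rfl | rfl⟩
      · have := app m
        rw [gPlus_self hn hm,
          Equiv.swap_apply_of_ne_of_ne (mne0 hn hm) (mne1 hn hm)] at this
        exact this.symm
      · rcases eq_or_ne a m with rfl | ham
        · exact absurd (eq_one_of_fix hn hsw) hx
        · have := app m
          rw [gPlus_self hn hm,
            gPlus_other hn ha (mne0 hn hm) (mne1 hn hm) (Ne.symm ham)] at this
          exact this.symm
      · exfalso
        have := app 1
        rw [gPlus_one hn hm, gMinus_one hn ha] at this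
        have ha0 : a = 0 := x.injective (by rw [← this, h0])
        exact mne0 hn ha ha0
    have : m = x⁻¹ 1 := by rw [← hxm, Equiv.Perm.inv_def, Equiv.symm_apply_apply]
    rw [this]
    exact Set.mem_insert_iff.mpr (Or.inr rfl)
  · -- s = gMinus m : impossible
    exfalso
    rcases hwT with rfl | ⟨a, ha, rfl | rfl⟩
    · have := app 1
      rw [gMinus_one hn hm, Equiv.swap_apply_right, h0] at this
      exact mne0 hn hm this
    · have := app 1
      rw [gMinus_one hn hm, gPlus_one hn ha, h0] at this
      exact mne0 hn hm this
    · rcases eq_or_ne a m with rfl | ham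
      · exact absurd (eq_one_of_fix hn hsw) hx
      · have := app a
        rw [gMinus_other hn hm (mne0 hn ha) (mne1 hn ha) ham,
          gMinus_self hn ha, h0] at this
        exact mne0 hn ha this

lemma cset_sub_two {x : Equiv.Perm (Fin n)} (hx : x ≠ 1) (h1 : x 1 = 1) :
    Cset n x ⊆ {Equiv.swap 0 1, gMinus n (x⁻¹ 0)} := by
  rintro s ⟨hsT, w, hwT, hsw⟩
  have app : ∀ j, s j = x (w j) := fun j => by rw [hsw]; rfl
  rcases hsT with rfl | ⟨m, hm, rfl | rfl⟩
  · exact Set.mem_insert _ _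
  · -- s = gPlus m : impossible
    exfalso
    rcases hwT with rfl | ⟨a, ha, rfl | rfl⟩
    · have := app 0
      rw [gPlus_zero hn hm, Equiv.swap_apply_left, h1] at this
      exact mne1 hn hm this
    · rcases eq_or_ne a m with rfl | ham
      · exact absurd (eq_one_of_fix hn hsw) hx
      · have := app a
        rw [gPlus_other hn hm (mne0 hn ha) (mne1 hn ha) ham,
          gPlus_self hn ha, h1] at this
        exact mne1 hn ha this
    · have := app 0
      rw [gPlus_zero hn hm, gMinus_zero hn ha, h1] at this
      exact mne1 hn hm this
  · -- s = gMinus m : show x m = 0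
    have hxm : x m = 0 := by
      rcases hwT with rfl | ⟨a, ha, rfl | rfl⟩
      · have := app m
        rw [gMinus_self hn hm,
          Equiv.swap_apply_of_ne_of_ne (mne0 hn hm) (mne1 hn hm)] at this
        exact this.symm
      · exfalso
        have := app 0
        rw [gMinus_zero hn hm, gPlus_zero hn ha] at this
        have ha1 : a = 1 := x.injective (by rw [← this, h1])
        exact mne1 hn ha ha1
      · rcases eq_or_ne a m with rfl | ham
        · exact absurd (eq_one_of_fix hn hsw) hx
        · have := app m
          rw [gMinus_self hn hm,
            gMinus_other hn ha (mne0 hn hm) (mne1 hn hm) (Ne.symm ham)] at this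
          exact this.symm
    have : m = x⁻¹ 0 := by rw [← hxm, Equiv.Perm.inv_def, Equiv.symm_apply_apply]
    rw [this]
    exact Set.mem_insert_iff.mpr (Or.inr rfl)

lemma cset_sub_three {x : Equiv.Perm (Fin n)} (h0 : x 0 ≠ 0) (h1 : x 1 ≠ 1) :
    Cset n x ⊆ {x * gMinus n (x⁻¹ 0), x * gPlus n (x⁻¹ 1)} := by
  rintro s ⟨hsT, w, hwT, hsw⟩
  have app : ∀ j, s j = x (w j) := fun j => by rw [hsw]; rfl
  have hA : s 1 = 0 → w = gMinus n (x⁻¹ 0) := by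
    intro hs1
    rcases hwT with rfl | ⟨a, ha, rfl | rfl⟩
    · exfalso
      have := app 1
      rw [hs1, Equiv.swap_apply_right] at this
      exact h0 this.symm
    · exfalso
      have := app 1
      rw [hs1, gPlus_one hn ha] at this
      exact h0 this.symm
    · have := app 1
      rw [hs1, gMinus_one hn ha] at this
      have : a = x⁻¹ 0 := by rw [← this.symm, Equiv.Perm.inv_def, Equiv.symm_apply_apply]
      rw [this]
  have hB : s 0 = 1 → w = gPlus n (x⁻¹ 1) := by
    intro hs0
    rcases hwT with rfl | ⟨a, ha, rfl | rfl⟩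
    · exfalso
      have := app 0
      rw [hs0, Equiv.swap_apply_left] at this
      exact h1 this.symm
    · have := app 0
      rw [hs0, gPlus_zero hn ha] at this
      have : a = x⁻¹ 1 := by rw [← this.symm, Equiv.Perm.inv_def, Equiv.symm_apply_apply]
      rw [this]
    · exfalso
      have := app 0
      rw [hs0, gMinus_zero hn ha] at this
      exact h1 this.symm
  rcases hsT with rfl | ⟨m, hm, rfl | rfl⟩
  · have := hA (Equiv.swap_apply_right 0 1)
    rw [hsw, this]
    exact Set.mem_insert _ _
  · have := hA (gPlus_one hn hm)
    rw [hsw, this]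
    exact Set.mem_insert _ _
  · have := hB (gMinus_zero hn hm)
    rw [hsw, this]
    exact Set.mem_insert_iff.mpr (Or.inr rfl)

lemma cset_card {x : Equiv.Perm (Fin n)} (hx : x ≠ 1) : (Cset n x).ncard ≤ 2 := by
  have pair : ∀ a b : Equiv.Perm (Fin n),
      ({a, b} : Set (Equiv.Perm (Fin n))).ncard ≤ 2 := by
    intro a b
    have := Set.ncard_insert_le a {b}
    simpa using this
  by_cases h0 : x 0 = 0
  · exact le_trans (Set.ncard_le_ncard (cset_sub_one hn hx h0)
      (Set.toFinite _)) (pair _ _)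
  by_cases h1 : x 1 = 1
  · exact le_trans (Set.ncard_le_ncard (cset_sub_two hn hx h1)
      (Set.toFinite _)) (pair _ _)
  · exact le_trans (Set.ncard_le_ncard (cset_sub_three hn h0 h1)
      (Set.toFinite _)) (pair _ _)

end key

section card
variable (hn : 4 ≤ n)
include hn

/-- The index set. -/
def Iset (n : ℕ) : Set (Fin n) := {m | 2 ≤ m.val}

lemma iset_card : (Iset n).ncard = n - 2 := by
  have hc : (Iset n)ᶜ = {0, 1} := by
    ext m
    simp only [Iset, Set.mem_compl_iff, Set.mem_setOf_eq, not_le, Set.mem_insert_iff,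
      Set.mem_singleton_iff]
    constructor
    · intro h
      interval_cases hv : m.val
      · left; exact Fin.ext (by simp [hv])
      · right; exact Fin.ext (by rw [hv, val_one hn])
    · rintro (rfl | rfl)
      · simp
      · rw [val_one hn]; omega
  have h2 : ((Iset n)ᶜ).ncard = 2 := by rw [hc]; exact Set.ncard_pair (zne hn)
  have := Set.ncard_add_ncard_compl (Iset n)
  rw [h2, Nat.card_eq_fintype_card, Fintype.card_fin] at this
  omega

lemma tset_eq : Tset n =
    insert (Equiv.swap 0 1) ((gPlus n '' Iset n) ∪ (gMinus n '' Iset n)) := by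
  ext s
  simp only [Tset, Set.mem_setOf_eq, Set.mem_insert_iff, Set.mem_union, Set.mem_image,
    Iset, Set.mem_setOf_eq]
  constructor
  · rintro (rfl | ⟨m, hm, rfl | rfl⟩)
    · exact Or.inl rfl
    · exact Or.inr (Or.inl ⟨m, hm, rfl⟩)
    · exact Or.inr (Or.inr ⟨m, hm, rfl⟩)
  · rintro (rfl | ⟨m, hm, rfl⟩ | ⟨m, hm, rfl⟩)
    · exact Or.inl rfl
    · exact Or.inr ⟨m, hm, Or.inl rfl⟩
    · exact Or.inr ⟨m, hm, Or.inr rfl⟩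

lemma tset_card : (Tset n).ncard = 2 * n - 3 := by
  have hinjP : Set.InjOn (gPlus n) (Iset n) := by
    intro a ha b hb h
    have := congrArg (fun e => e 0) h
    simp only [gPlus_zero hn ha, gPlus_zero hn hb] at this
    exact this
  have hinjM : Set.InjOn (gMinus n) (Iset n) := by
    intro a ha b hb h
    have := congrArg (fun e => e 1) h
    simp only [gMinus_one hn ha, gMinus_one hn hb] at this
    exact this
  have hdisj : Disjoint (gPlus n '' Iset n) (gMinus n '' Iset n) := by
    rw [Set.disjoint_left]
    rintro s ⟨a, ha, rfl⟩ ⟨b, hb, h⟩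
    have := congrArg (fun e => e 1) h
    simp only [gMinus_one hn hb, gPlus_one hn ha] at this
    exact mne0 hn hb this
  have hnotmem : Equiv.swap (0:Fin n) 1 ∉ (gPlus n '' Iset n) ∪ (gMinus n '' Iset n) := by
    rintro (⟨a, ha, h⟩ | ⟨a, ha, h⟩)
    · have := congrArg (fun e => e 0) h
      simp only [gPlus_zero hn ha, Equiv.swap_apply_left] at this
      exact mne1 hn ha this
    · have := congrArg (fun e => e 1) h
      simp only [gMinus_one hn ha, Equiv.swap_apply_right] at this
      exact mne0 hn ha this
  rw [tset_eq hn, Set.ncard_insert_of_notMem hnotmem, Set.ncard_union_eq hdisj,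
    Set.ncard_image_of_injOn hinjP, Set.ncard_image_of_injOn hinjM, iset_card hn]
  omega

lemma nset_eq (p : Equiv.Perm (Fin n)) :
    {q | (SplitStar n).Adj p q} = (fun s => p * s) '' Tset n := by
  ext q
  simp only [Set.mem_setOf_eq, Set.mem_image, adj_iff hn]
  constructor
  · rintro ⟨s, hs, rfl⟩; exact ⟨s, hs, rfl⟩
  · rintro ⟨s, hs, rfl⟩; exact ⟨s, hs, rfl⟩

lemma nset_card (p : Equiv.Perm (Fin n)) :
    {q | (SplitStar n).Adj p q}.ncard = 2 * n - 3 := by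
  rw [nset_eq hn p, Set.ncard_image_of_injective _ (fun a b h => mul_left_cancel h),
    tset_card hn]

end card
end SSP


theorem stmt_13 (n : ℕ) [NeZero n] (hn : 4 ≤ n)
    (S : Set (Equiv.Perm (Fin n)))
    (hcard : S.ncard = 2) (hind : IsIndep (SplitStar n) S) :
    4 * n - 8 ≤ (nbhd (SplitStar n) S).ncard := by
  obtain ⟨u, v, huv, rfl⟩ := Set.ncard_eq_two.mp hcard
  have huS : u ∈ ({u, v} : Set (Equiv.Perm (Fin n))) := Set.mem_insert _ _
  have hvS : v ∈ ({u, v} : Set (Equiv.Perm (Fin n))) :=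
    Set.mem_insert_iff.mpr (Or.inr rfl)
  have hadjuv : ¬ (SplitStar n).Adj u v := hind u huS v hvS
  have hadjvu : ¬ (SplitStar n).Adj v u := hind v hvS u huS
  have hnb : nbhd (SplitStar n) {u, v} =
      {q | (SplitStar n).Adj u q} ∪ {q | (SplitStar n).Adj v q} := by
    ext w
    constructor
    · rintro ⟨hwS, z, hz, hadj⟩
      rcases Set.mem_insert_iff.mp hz with rfl | hz
      · exact Or.inl hadj
      · rw [Set.mem_singleton_iff] at hz
        subst hz
        exact Or.inr hadj
    · rintro (h | h)
      · refine ⟨?_, u, huS, h⟩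
        intro hw
        rcases Set.mem_insert_iff.mp hw with rfl | hw
        · exact (SplitStar n).irrefl h
        · rw [Set.mem_singleton_iff] at hw
          subst hw
          exact hadjuv h
      · refine ⟨?_, v, hvS, h⟩
        intro hw
        rcases Set.mem_insert_iff.mp hw with rfl | hw
        · exact hadjvu h
        · rw [Set.mem_singleton_iff] at hw
          subst hw
          exact (SplitStar n).irrefl h
  have hu : {q | (SplitStar n).Adj u q}.ncard = 2 * n - 3 := SSP.nset_card hn u
  have hv : {q | (SplitStar n).Adj v q}.ncard = 2 * n - 3 := SSP.nset_card hn v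
  have hsum := Set.ncard_union_add_ncard_inter
    {q | (SplitStar n).Adj u q} {q | (SplitStar n).Adj v q}
  have hint : ({q | (SplitStar n).Adj u q} ∩ {q | (SplitStar n).Adj v q}).ncard ≤ 2 := by
    have hx : u⁻¹ * v ≠ 1 := by
      intro h
      exact huv (inv_mul_eq_one.mp h)
    have hsub : {q | (SplitStar n).Adj u q} ∩ {q | (SplitStar n).Adj v q} ⊆
        (fun s => u * s) '' SSP.Cset n (u⁻¹ * v) := by
      rintro w ⟨hw1, hw2⟩
      rw [Set.mem_setOf_eq, SSP.adj_iff hn] at hw1 hw2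
      obtain ⟨s, hs, rfl⟩ := hw1
      obtain ⟨w', hw', heq⟩ := hw2
      refine ⟨s, ⟨hs, w', hw', ?_⟩, rfl⟩
      calc s = u⁻¹ * (u * s) := by group
        _ = u⁻¹ * (v * w') := by rw [← heq]
        _ = (u⁻¹ * v) * w' := by rw [mul_assoc]
    calc ({q | (SplitStar n).Adj u q} ∩ {q | (SplitStar n).Adj v q}).ncard
        ≤ ((fun s => u * s) '' SSP.Cset n (u⁻¹ * v)).ncard :=
          Set.ncard_le_ncard hsub (Set.toFinite _)
      _ ≤ (SSP.Cset n (u⁻¹ * v)).ncard := Set.ncard_image_le (Set.toFinite _)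
      _ ≤ 2 := SSP.cset_card hn hx
  rw [hnb]
  rw [hu, hv] at hsum
  omega
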